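/- Let S ⊆ ℝⁿ, and let x, x₁, …, x_m ∈ S with x ∉ {x₁,…,x_m}. Let U_A ⊆ ℝ^{n×n} and U_g := {g : ℝⁿ → ℝⁿ | ‖g(z)‖_∞ ≤ γ‖z‖_p^d for all z ∈ S}, and fix y₁,…,y_m ∈ ℝⁿ and h ∈ ℝⁿ. Then sup over pairs (A,g) ∈ U_A × U_g with Ax_k + g(x_k) = y_k for all k, of h^T(Ax + g(x)), equals [sup over such pairs of h^T A x] + [sup over such pairs of h^T g(x)], provided both suprema on the right are attained. -/

import Mathlib

theorem inner_sup_splits (n m : ℕ) (S : Set (Fin n → ℝ))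
    (x : Fin n → ℝ) (xs : Fin m → (Fin n → ℝ))
    (hxS : x ∈ S) (hxsS : ∀ k, xs k ∈ S) (hxne : ∀ k, x ≠ xs k)
    (UA : Set (Matrix (Fin n) (Fin n) ℝ))
    (γ : ℝ) (hγ : 0 < γ) (p : ℝ) (hp : 1 ≤ p) (d : ℕ)
    (ys : Fin m → (Fin n → ℝ)) (h : Fin n → ℝ)
    (Feasible : Set (Matrix (Fin n) (Fin n) ℝ × ((Fin n → ℝ) → (Fin n → ℝ))))
    (hFeas : Feasible = {Ag | Ag.1 ∈ UA ∧
      (∀ z ∈ S, ∀ i, |Ag.2 z i| ≤ γ * ((∑ j, |z j| ^ p) ^ (1 / p)) ^ d) ∧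
      ∀ k, Ag.1.mulVec (xs k) + Ag.2 (xs k) = ys k})
    (s₁ s₂ : ℝ)
    (h₁ : IsGreatest ((fun Ag => dotProduct h (Ag.1.mulVec x)) '' Feasible) s₁)
    (h₂ : IsGreatest ((fun Ag => dotProduct h (Ag.2 x)) '' Feasible) s₂) :
    sSup ((fun Ag => dotProduct h (Ag.1.mulVec x + Ag.2 x)) '' Feasible)
      = s₁ + s₂ := by
  obtain ⟨⟨Ag1, hAg1, hv1⟩, hub1⟩ := h₁
  obtain ⟨⟨Ag2, hAg2, hv2⟩, hub2⟩ := h₂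
  apply IsGreatest.csSup_eq
  constructor
  · refine ⟨(Ag1.1, fun z => if z = x then Ag2.2 z else Ag1.2 z), ?_, ?_⟩
    · rw [hFeas] at hAg1 hAg2 ⊢
      refine ⟨hAg1.1, ?_, ?_⟩
      · intro z hz i
        by_cases hzx : z = x
        · simpa [hzx] using hAg2.2.1 z hz i
        · simpa [hzx] using hAg1.2.1 z hz i
      · intro k
        have hne : (xs k) ≠ x := fun e => hxne k e.symm
        simpa [hne] using hAg1.2.2 k
    · simp only [dotProduct_add, if_pos trivial]
      exact congrArg₂ (· + ·) hv1 hv2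
  · rintro r ⟨Ag, hAg, rfl⟩
    simp only [dotProduct_add]
    exact add_le_add (hub1 ⟨Ag, hAg, rfl⟩) (hub2 ⟨Ag, hAg, rfl⟩)
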